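/- Let n ≥ 2 and let d = (d_1, …, d_n) be integers with 2 ≤ d_1 ≤ ⋯ ≤ d_n and d_n − 1 > ∑_{i=1}^{n−1}(d_i − 1). Then for every n-player game X of format d over ℂ, the Nash equilibrium set of X is nonempty if and only if there exist nonzero vectors π^{(1)} ∈ ℂ^{d_1}, …, π^{(n−1)} ∈ ℂ^{d_{n−1}} such that all entries of the contraction X^{(n)}(π_{−n}) ∈ ℂ^{d_n} are equal. -/
import Mathlib


/-- Insert the value `s` at position `i` into an index tuple defined on all positions `≠ i`,
producing a full multi-index in `∏ k, Fin (d k)`. -/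
def insertAt {n : ℕ} (d : Fin n → ℕ) (i : Fin n) (s : Fin (d i))
    (j : ∀ m : {m : Fin n // m ≠ i}, Fin (d m.1)) : ∀ k, Fin (d k) :=
  fun k => if h : k = i then Fin.cast (congrArg d h.symm) s else j ⟨k, h⟩

/-- The contraction `X⁽ⁱ⁾(π₋ᵢ) ∈ K^{dᵢ}`: its `s`-th entry is
`∑_{j₋ᵢ} X_{(s, j₋ᵢ)} ∏_{l ≠ i} π⁽ˡ⁾_{j_l}`. -/
noncomputable def contraction {n : ℕ} (d : Fin n → ℕ) {K : Type*} [CommRing K] (i : Fin n)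
    (X : (∀ k, Fin (d k)) → K)
    (π : ∀ m : {m : Fin n // m ≠ i}, Fin (d m.1) → K) (s : Fin (d i)) : K :=
  ∑ j : ∀ m : {m : Fin n // m ≠ i}, Fin (d m.1),
    X (insertAt d i s j) * ∏ m : {m : Fin n // m ≠ i}, π m (j m)

/-- The strategy profile for player `i`, obtained from strategies `π` of the players `≠ i0`
together with a strategy `v` for player `i0` (assuming `i ≠ i0`). -/
def profileAt {n : ℕ} (d : Fin n → ℕ) (i i0 : Fin n)
    (π : ∀ m : {m : Fin n // m ≠ i0}, Fin (d m.1) → ℂ)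
    (v : Fin (d i0) → ℂ) (m : {m : Fin n // m ≠ i}) : Fin (d m.1) → ℂ :=
  if h : m.1 = i0 then (fun t => v (Fin.cast (congrArg d h) t)) else π ⟨m.1, h⟩

lemma contraction_profileAt {n : ℕ} (d : Fin n → ℕ) (i i0 : Fin n) (hne : i0 ≠ i)
    (X : (∀ k, Fin (d k)) → ℂ)
    (π : ∀ m : {m : Fin n // m ≠ i0}, Fin (d m.1) → ℂ)
    (s : Fin (d i)) (v : Fin (d i0) → ℂ) :
    contraction d i X (profileAt d i i0 π v) s
      = ∑ j : ∀ m : {m : Fin n // m ≠ i}, Fin (d m.1),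
          (X (insertAt d i s j) *
            ∏ m ∈ Finset.univ.erase (⟨i0, hne⟩ : {m : Fin n // m ≠ i}),
              profileAt d i i0 π 0 m (j m)) * v (j ⟨i0, hne⟩) := by
  unfold contraction
  refine Finset.sum_congr rfl fun j _ => ?_
  rw [← Finset.mul_prod_erase Finset.univ _
    (Finset.mem_univ (⟨i0, hne⟩ : {m : Fin n // m ≠ i}))]
  have h1 : profileAt d i i0 π v ⟨i0, hne⟩ (j ⟨i0, hne⟩) = v (j ⟨i0, hne⟩) := by
    simp only [profileAt, dif_pos rfl]
    exact congrArg v (Fin.ext rfl)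
  have h2 : ∀ m ∈ Finset.univ.erase (⟨i0, hne⟩ : {m : Fin n // m ≠ i}),
      profileAt d i i0 π v m (j m) = profileAt d i i0 π 0 m (j m) := by
    intro m hm
    have hm' : m.1 ≠ i0 := fun h => (Finset.mem_erase.mp hm).1 (Subtype.ext h)
    simp only [profileAt, dif_neg hm']
  rw [Finset.prod_congr rfl h2, h1]
  ring

/-- The linear map sending a strategy `v` of player `i0` to the collection of differences
of entries of the contractions of all other players. -/
noncomputable def eqnsMap {n : ℕ} (d : Fin n → ℕ) (i0 : Fin n) (hd : ∀ i, 2 ≤ d i)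
    (X : ∀ i : Fin n, (∀ k, Fin (d k)) → ℂ)
    (π : ∀ m : {m : Fin n // m ≠ i0}, Fin (d m.1) → ℂ) :
    (Fin (d i0) → ℂ) →ₗ[ℂ] ((Σ i : {i : Fin n // i ≠ i0}, Fin (d i.1 - 1)) → ℂ) where
  toFun v p :=
    contraction d p.1.1 (X p.1.1) (profileAt d p.1.1 i0 π v)
        ⟨p.2.1 + 1, by have := p.2.2; omega⟩ -
      contraction d p.1.1 (X p.1.1) (profileAt d p.1.1 i0 π v)
        ⟨0, by have := hd p.1.1; omega⟩
  map_add' v w := by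
    funext p
    have hne : i0 ≠ p.1.1 := fun h => p.1.2 h.symm
    simp only [contraction_profileAt d p.1.1 i0 hne, Pi.add_apply, mul_add,
      Finset.sum_add_distrib]
    ring
  map_smul' c v := by
    funext p
    have hne : i0 ≠ p.1.1 := fun h => p.1.2 h.symm
    simp only [contraction_profileAt d p.1.1 i0 hne, Pi.smul_apply, smul_eq_mul,
      RingHom.id_apply]
    rw [mul_sub, Finset.mul_sum, Finset.mul_sum]
    congr 1 <;> exact Finset.sum_congr rfl fun j _ => by ring

/-- if `2 ≤ d₁ ≤ ⋯ ≤ dₙ` and `dₙ - 1 > ∑_{i=1}^{n-1} (dᵢ - 1)`, then for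
every game `X` of format `d` over `ℂ`, the Nash equilibrium set is nonempty iff there
exist nonzero `π⁽¹⁾, …, π⁽ⁿ⁻¹⁾` with all entries of `X⁽ⁿ⁾(π₋ₙ)` equal. -/
theorem nash_nonempty_iff_last_contraction (n : ℕ) (hn : 2 ≤ n) (d : Fin n → ℕ)
    (hd : ∀ i, 2 ≤ d i) (hmono : Monotone d)
    (hfmt : ∑ i ∈ Finset.univ.erase (⟨n - 1, by omega⟩ : Fin n), (d i - 1) <
      d ⟨n - 1, by omega⟩ - 1)
    (X : ∀ i : Fin n, (∀ k, Fin (d k)) → ℂ) :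
    (∃ π : ∀ k, Fin (d k) → ℂ, (∀ k, π k ≠ 0) ∧
      ∀ i : Fin n, ∀ s t : Fin (d i),
        contraction d i (X i) (fun m => π m.1) s =
          contraction d i (X i) (fun m => π m.1) t) ↔
    (∃ π : ∀ m : {m : Fin n // m ≠ (⟨n - 1, by omega⟩ : Fin n)}, Fin (d m.1) → ℂ,
      (∀ m, π m ≠ 0) ∧
      ∀ s t : Fin (d (⟨n - 1, by omega⟩ : Fin n)),
        contraction d ⟨n - 1, by omega⟩ (X ⟨n - 1, by omega⟩) π s =
          contraction d ⟨n - 1, by omega⟩ (X ⟨n - 1, by omega⟩) π t) := by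
  have hn' : n - 1 < n := by omega
  set i0 : Fin n := ⟨n - 1, hn'⟩ with hi0def
  constructor
  · rintro ⟨π, hπ, heq⟩
    exact ⟨fun m => π m.1, fun m => hπ m.1, fun s t => heq i0 s t⟩
  · rintro ⟨π, hπ, heq⟩
    have hfmt' : ∑ i ∈ Finset.univ.erase i0, (d i - 1) < d i0 - 1 := hfmt
    set L := eqnsMap d i0 hd X π with hLdef
    -- cardinality bound
    have hcard : Fintype.card (Σ i : {i : Fin n // i ≠ i0}, Fin (d i.1 - 1)) < d i0 := by
      have hc : Fintype.card (Σ i : {i : Fin n // i ≠ i0}, Fin (d i.1 - 1))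
          = ∑ i ∈ Finset.univ.erase i0, (d i - 1) := by
        rw [Fintype.card_sigma]
        simp only [Fintype.card_fin]
        exact (Finset.sum_subtype _ (fun x => by simp) (fun i => d i - 1)).symm
      omega
    -- L is not injective
    have hninj : ¬ Function.Injective L := by
      intro h
      have hle := LinearMap.finrank_le_finrank_of_injective h
      rw [Module.finrank_pi, Module.finrank_pi, Fintype.card_fin] at hle
      omega
    rw [Function.not_injective_iff] at hninj
    obtain ⟨a, b, hab, habne⟩ := hninj
    have hv0ne : a - b ≠ 0 := sub_ne_zero.mpr habne
    have hLv0 : L (a - b) = 0 := by rw [map_sub, hab, sub_self]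
    set v0 := a - b with hv0def
    -- the full strategy profile
    refine ⟨fun k => if h : k = i0 then (fun t => v0 (Fin.cast (congrArg d h) t))
      else π ⟨k, h⟩, ?_, ?_⟩
    · intro k
      by_cases hk : k = i0
      · simp only [dif_pos hk]
        intro h0
        apply hv0ne
        funext u
        have h1 := congrFun h0 (Fin.cast (congrArg d hk).symm u)
        have h2 : Fin.cast (congrArg d hk) (Fin.cast (congrArg d hk).symm u) = u :=
          Fin.ext rfl
        rw [h2] at h1
        simpa using h1
      · simp only [dif_neg hk]
        exact hπ ⟨k, hk⟩
    · intro i s t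
      by_cases hi : i = i0
      · subst hi
        have hres : (fun m : {m : Fin n // m ≠ i0} =>
            (fun k => if h : k = i0 then (fun t => v0 (Fin.cast (congrArg d h) t))
              else π ⟨k, h⟩) m.1) = π := by
          funext m
          simp only [dif_neg m.2]
        rw [hres]
        exact heq s t
      · -- the equations from L v0 = 0
        have hne : i0 ≠ i := fun h => hi h.symm
        have hprof : profileAt d i i0 π v0 = (fun m : {m : Fin n // m ≠ i} =>
            (fun k => if h : k = i0 then (fun t => v0 (Fin.cast (congrArg d h) t))
              else π ⟨k, h⟩) m.1) := rfl
        have key : ∀ s' : Fin (d i),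
            contraction d i (X i) (profileAt d i i0 π v0) s' =
              contraction d i (X i) (profileAt d i i0 π v0) ⟨0, by have := hd i; omega⟩ := by
          intro s'
          by_cases hs : s'.1 = 0
          · congr 1
            exact Fin.ext hs
          · have hq : s'.1 - 1 < d i - 1 := by have := s'.2; omega
            have hp := congrFun hLv0 ⟨⟨i, hi⟩, ⟨s'.1 - 1, hq⟩⟩
            simp only [hLdef, eqnsMap, LinearMap.coe_mk, AddHom.coe_mk, Pi.zero_apply,
              sub_eq_zero] at hp
            have hs' : (⟨s'.1 - 1 + 1, by have := s'.2; omega⟩ : Fin (d i)) = s' :=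
              Fin.ext (show s'.1 - 1 + 1 = s'.1 by omega)
            rw [hs'] at hp
            exact hp
        rw [← hprof]
        exact (key s).trans (key t).symm
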